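/- Let zᵢ = R xᵢ + t for all i with R ∈ SO(3), t ∈ ℝ³, and suppose the points x₁,...,xₙ are not collinear (n ≥ 3 and they affinely span a plane or more). Then the pair (R, t) satisfying zᵢ = R xᵢ + t for all i is unique: if R' ∈ SO(3), t' ∈ ℝ³ also satisfy zᵢ = R' xᵢ + t' for all i, then R' = R and t' = t. -/

import Mathlib

open Matrix

def SO3 : Set (Matrix (Fin 3) (Fin 3) ℝ) :=
  {R | R.transpose * R = 1 ∧ R.det = 1}

lemma cross_adj (A : Matrix (Fin 3) (Fin 3) ℝ) (u v : Fin 3 → ℝ) :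
    A.transpose.mulVec (crossProduct (A.mulVec u) (A.mulVec v)) =
      A.det • crossProduct u v := by
  ext i
  fin_cases i <;>
  · simp [crossProduct, Matrix.mulVec, dotProduct, Matrix.det_fin_three,
      Matrix.transpose, Fin.sum_univ_succ]
    ring

/-- if the points xᵢ are not collinear, the rigid transform (R, t)
with zᵢ = R xᵢ + t for all i is unique. -/
theorem stmt9 (n : ℕ) (x z : Fin n → Fin 3 → ℝ)
    -- not collinear: some pair of difference vectors is linearly independent
    (hnc : ∃ i j k : Fin n, LinearIndependent ℝ ![x j - x i, x k - x i])
    (R R' : Matrix (Fin 3) (Fin 3) ℝ) (t t' : Fin 3 → ℝ)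
    (hR : R ∈ SO3) (hR' : R' ∈ SO3)
    (hz : ∀ i, z i = R.mulVec (x i) + t)
    (hz' : ∀ i, z i = R'.mulVec (x i) + t') :
    R' = R ∧ t' = t := by
  obtain ⟨i, j, k, hli⟩ := hnc
  obtain ⟨hRo, hRd⟩ := hR
  obtain ⟨hRo', hRd'⟩ := hR'
  have hRR : R * R.transpose = 1 := (mul_eq_one_comm).mp hRo
  have heq : ∀ p, R.mulVec (x p) + t = R'.mulVec (x p) + t' := fun p => by
    rw [← hz p, ← hz' p]
  -- differences
  have hdiff : ∀ p q, R'.mulVec (x p - x q) = R.mulVec (x p - x q) := by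
    intro p q
    have h1 := heq p
    have h2 := heq q
    have : R.mulVec (x p) - R.mulVec (x q) = R'.mulVec (x p) - R'.mulVec (x q) := by
      have := congrArg₂ (· - ·) h1 h2
      simpa using by linear_combination (norm := module) this
    rw [Matrix.mulVec_sub, Matrix.mulVec_sub, this]
  set u := x j - x i with hu
  set v := x k - x i with hv
  set Q := R.transpose * R' with hQ
  have hQfix : ∀ w, R'.mulVec w = R.mulVec w → Q.mulVec w = w := by
    intro w hw
    rw [hQ, ← Matrix.mulVec_mulVec, hw, Matrix.mulVec_mulVec, hRo, Matrix.one_mulVec]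
  have hQu : Q.mulVec u = u := hQfix u (hdiff j i)
  have hQv : Q.mulVec v = v := hQfix v (hdiff k i)
  -- Q is in SO3
  have hQo : Q.transpose * Q = 1 := by
    rw [hQ, Matrix.transpose_mul, Matrix.transpose_transpose, Matrix.mul_assoc,
      ← Matrix.mul_assoc R, hRR, Matrix.one_mul, hRo']
  have hQQ : Q * Q.transpose = 1 := (mul_eq_one_comm).mp hQo
  have hQd : Q.det = 1 := by
    rw [hQ, Matrix.det_mul, Matrix.det_transpose, hRd, hRd', one_mul]
  -- Q fixes the cross product
  set w := crossProduct u v with hw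
  have hQw : Q.mulVec w = w := by
    have h := cross_adj Q u v
    rw [hQu, hQv, hQd, one_smul, ← hw] at h
    calc Q.mulVec w = Q.mulVec (Q.transpose.mulVec w) := by rw [h]
      _ = w := by rw [Matrix.mulVec_mulVec, hQQ, Matrix.one_mulVec]
  -- the three vectors are linearly independent
  have hwne : w ≠ 0 := crossProduct_ne_zero_iff_linearIndependent.mpr hli
  have hdet : (Matrix.of ![u, v, w]).det ≠ 0 := by
    have h1 : u ⬝ᵥ v ⨯₃ w = w ⬝ᵥ u ⨯₃ v := by
      rw [triple_product_permutation, triple_product_permutation]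
    have h2 : w ⬝ᵥ w ≠ 0 := by
      intro h
      exact hwne (by simpa using (dotProduct_self_eq_zero (v := w)).mp h)
    rw [show (Matrix.of ![u, v, w]).det = u ⬝ᵥ v ⨯₃ w from (triple_product_eq_det u v w).symm,
      h1, ← hw]
    exact h2
  have hli3 : LinearIndependent ℝ ![u, v, w] := by
    have := Matrix.linearIndependent_rows_iff_isUnit (A := Matrix.of ![u, v, w])
    have hU : IsUnit (Matrix.of ![u, v, w]) := by
      rw [Matrix.isUnit_iff_isUnit_det]
      exact hdet.isUnit
    have h := this.mpr hU
    exact h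
  have hspan : Submodule.span ℝ (Set.range ![u, v, w]) = ⊤ := by
    apply LinearIndependent.span_eq_top_of_card_eq_finrank hli3
    simp [Module.finrank_fintype_fun_eq_card]
  -- Q = 1
  have hQ1 : Q = 1 := by
    have hlin : Q.mulVecLin = (1 : Matrix (Fin 3) (Fin 3) ℝ).mulVecLin := by
      apply LinearMap.ext_on hspan
      rintro y ⟨p, rfl⟩
      fin_cases p <;> simp [hQu, hQv, hQw]
    exact Matrix.toLin'.injective hlin
  have hR'R : R' = R := by
    have : R * Q = R' := by
      rw [hQ, ← Matrix.mul_assoc, hRR, Matrix.one_mul]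
    rw [← this, hQ1, Matrix.mul_one]
  refine ⟨hR'R, ?_⟩
  have := heq i
  rw [hR'R] at this
  exact (add_left_cancel this.symm)
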